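/- Let $M$ be a finite loopless matroid on a linearly ordered ground set $E$, of rank $r+1$. Then for each $i$, the number of cardinality-$i$ subsets of $E$ that contain no broken circuit of $M$ equals the absolute value $w_i$ of the coefficient of $q^{r+1-i}$ in the characteristic polynomial $\chi_M(q) = \sum_{i=0}^{r+1}(-1)^i w_i q^{r+1-i}$. -/

import Mathlib

open Finset Polynomial

open scoped Classical in
/-- The rank of a set `X` in a matroid `M`. -/
noncomputable def matroidRank {α : Type*} (M : Matroid α) (X : Set α) : ℕ :=
  sSup {n | ∃ I : Finset α, ↑I ⊆ X ∧ M.Indep ↑I ∧ I.card = n}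

/-- A circuit of a matroid: a minimal dependent set (here as a finset). -/
def IsMatroidCircuit {α : Type*} (M : Matroid α) (C : Finset α) : Prop :=
  ↑C ⊆ M.E ∧ ¬ M.Indep ↑C ∧ ∀ D : Finset α, D ⊂ C → M.Indep ↑D

/-- A broken circuit: a circuit with its least element (in the linear order) removed. -/
def IsBrokenCircuit {α : Type*} [LinearOrder α] (M : Matroid α) (B : Finset α) : Prop :=
  ∃ C : Finset α, IsMatroidCircuit M C ∧ ∃ h : C.Nonempty, B = C.erase (C.min' h)
open Finset Polynomial
open scoped Classical
set_option linter.unusedSectionVars false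
set_option maxHeartbeats 1000000

section A
variable {α : Type*} [Fintype α] {M : Matroid α}

lemma wbc_flat_closure (M : Matroid α) (X : Set α) : M.IsFlat (M.closure X) := by
  rw [Matroid.closure_def, Set.sInter_eq_iInter]
  have : Nonempty {F // F ∈ {F | M.IsFlat F ∧ X ∩ M.E ⊆ F}} :=
    ⟨⟨M.E, M.ground_isFlat, Set.inter_subset_right⟩⟩
  exact Matroid.IsFlat.iInter fun F => F.2.1

lemma wbc_bddAbove (X : Set α) :
    BddAbove {n | ∃ I : Finset α, ↑I ⊆ X ∧ M.Indep ↑I ∧ I.card = n} := by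
  refine ⟨Fintype.card α, fun n hn => ?_⟩
  obtain ⟨I, -, -, rfl⟩ := hn
  exact I.card_le_univ

lemma wbc_nonempty (X : Set α) :
    Set.Nonempty {n | ∃ I : Finset α, ↑I ⊆ X ∧ M.Indep ↑I ∧ I.card = n} :=
  ⟨0, ∅, by simp, by simp, rfl⟩

lemma card_le_matroidRank {X : Set α} {I : Finset α} (hIX : ↑I ⊆ X) (hI : M.Indep ↑I) :
    I.card ≤ matroidRank M X :=
  le_csSup (wbc_bddAbove X) ⟨I, hIX, hI, rfl⟩

lemma exists_matroidRank_witness (X : Set α) :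
    ∃ I : Finset α, ↑I ⊆ X ∧ M.Indep ↑I ∧ I.card = matroidRank M X :=
  Nat.sSup_mem (wbc_nonempty X) (wbc_bddAbove X)

lemma matroidRank_mono {X Y : Set α} (h : X ⊆ Y) : matroidRank M X ≤ matroidRank M Y := by
  obtain ⟨I, hIX, hI, hcard⟩ := exists_matroidRank_witness (M := M) X
  rw [← hcard]
  exact card_le_matroidRank (hIX.trans h) hI

lemma matroidRank_indep {S : Finset α} (hS : M.Indep ↑S) : matroidRank M ↑S = S.card := by
  refine le_antisymm (csSup_le (wbc_nonempty _) ?_) (card_le_matroidRank subset_rfl hS)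
  rintro n ⟨I, hIS, -, rfl⟩
  exact Finset.card_le_card (Finset.coe_subset.mp hIS)

variable (hE : M.E = Set.univ)
include hE

lemma wbc_subset_closure (X : Set α) : X ⊆ M.closure X :=
  M.subset_closure X (by rw [hE]; exact Set.subset_univ _)

lemma wbc_spanning {X : Set α} {I : Finset α} (hIX : ↑I ⊆ X) (hI : M.Indep ↑I)
    (hmax : ∀ J : Finset α, ↑J ⊆ X → M.Indep ↑J → J.card ≤ I.card) :
    X ⊆ M.closure ↑I := by
  intro x hx
  by_cases hxI : x ∈ I
  · exact wbc_subset_closure hE _ hxI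
  by_contra hxcl
  have h2 := (hI.notMem_closure_iff (by rw [hE]; trivial)).mp hxcl
  have h4 := hmax (insert x I) (by rw [Finset.coe_insert]; exact Set.insert_subset hx hIX)
    (by rw [Finset.coe_insert]; exact h2.1)
  rw [Finset.card_insert_of_notMem hxI] at h4
  omega

lemma wbc_exists_spanning_witness (X : Set α) :
    ∃ I : Finset α, ↑I ⊆ X ∧ M.Indep ↑I ∧ I.card = matroidRank M X ∧
      M.closure ↑I = M.closure X := by
  obtain ⟨I, hIX, hI, hcard⟩ := exists_matroidRank_witness (M := M) X
  refine ⟨I, hIX, hI, hcard, ?_⟩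
  refine subset_antisymm (M.closure_subset_closure hIX) ?_
  have hXcl : X ⊆ M.closure ↑I :=
    wbc_spanning hE hIX hI fun J hJX hJ => hcard ▸ card_le_matroidRank hJX hJ
  calc M.closure X ⊆ M.closure (M.closure ↑I) := M.closure_subset_closure hXcl
    _ = M.closure ↑I := M.closure_closure _

lemma wbc_indep_card_le_of_subset_closure {X : Set α} {J : Finset α}
    (hJ : M.Indep ↑J) (hJX : ↑J ⊆ M.closure X) : J.card ≤ matroidRank M X := by
  obtain ⟨I, hIX, hI, hcard, hclI⟩ := wbc_exists_spanning_witness (M := M) hE X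
  rw [← hcard]
  by_contra hlt
  push_neg at hlt
  have haug := hI.augment hJ (by
    rw [Set.encard_coe_eq_coe_finsetCard, Set.encard_coe_eq_coe_finsetCard]
    exact_mod_cast hlt)
  obtain ⟨e, he, heI⟩ := haug
  have heclI : e ∈ M.closure ↑I := hclI ▸ hJX he.1
  rcases (hI.mem_closure_iff).mp heclI with hdep | hmem
  · exact hdep.not_indep heI
  · exact he.2 hmem

lemma matroidRank_closure (X : Set α) : matroidRank M (M.closure X) = matroidRank M X := by
  refine le_antisymm ?_ (matroidRank_mono (wbc_subset_closure hE X))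
  refine csSup_le (wbc_nonempty _) ?_
  rintro n ⟨J, hJX, hJ, rfl⟩
  exact wbc_indep_card_le_of_subset_closure hE hJ hJX

end A
section B
variable {α : Type*} [Fintype α] [LinearOrder α] {M : Matroid α} (hE : M.E = Set.univ)
include hE

lemma wbc_dep_contains_circuit {S : Finset α} (hS : ¬ M.Indep ↑S) :
    ∃ C : Finset α, C ⊆ S ∧ IsMatroidCircuit M C := by
  have hne : (S.powerset.filter fun D : Finset α => ¬ M.Indep (↑D : Set α)).Nonempty :=
    ⟨S, by simp [hS]⟩
  obtain ⟨C, hC, hmin⟩ := Finset.exists_min_image _ Finset.card hne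
  rw [Finset.mem_filter, Finset.mem_powerset] at hC
  refine ⟨C, hC.1, by rw [hE]; exact Set.subset_univ _, hC.2, fun D hD => ?_⟩
  by_contra hDdep
  have := hmin D (by rw [Finset.mem_filter, Finset.mem_powerset]; exact ⟨hD.1.trans hC.1, hDdep⟩)
  exact absurd (Finset.card_lt_card hD) (by omega)

/-- membership of an element of a circuit in the closure of the rest -/
lemma wbc_circuit_mem_closure {C : Finset α} (hC : IsMatroidCircuit M C) {x : α} (hx : x ∈ C) :
    x ∈ M.closure ↑(C.erase x) := by
  have hIndep : M.Indep ↑(C.erase x) := hC.2.2 _ (Finset.erase_ssubset hx)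
  rw [hIndep.mem_closure_iff]
  by_cases hxm : x ∈ C.erase x
  · exact Or.inr hxm
  left
  rw [Matroid.dep_iff]
  constructor
  · intro hind
    apply hC.2.1
    have : (insert x (C.erase x) : Finset α) = C := Finset.insert_erase hx
    rwa [← Finset.coe_insert, this] at hind
  · rw [hE]; exact Set.subset_univ _

/-- S contains a broken circuit iff some element is in the closure of the larger elements of S. -/
lemma wbc_broken_iff {S : Finset α} :
    (∃ B, IsBrokenCircuit M B ∧ B ⊆ S) ↔
      ∃ e, e ∈ M.closure ↑(S.filter (e < ·)) := by
  constructor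
  · rintro ⟨B, ⟨C, hC, hne, rfl⟩, hBS⟩
    set e := C.min' hne with he
    refine ⟨e, ?_⟩
    have h1 : e ∈ M.closure ↑(C.erase e) := wbc_circuit_mem_closure hE hC (C.min'_mem hne)
    refine M.closure_subset_closure ?_ h1
    intro x hx
    simp only [Finset.coe_erase, Set.mem_diff, Set.mem_singleton_iff, Finset.mem_coe] at hx
    have hxC : x ∈ C.erase e := Finset.mem_erase.mpr ⟨hx.2, hx.1⟩
    simp only [Finset.coe_filter, Set.mem_setOf_eq]
    exact ⟨hBS hxC, lt_of_le_of_ne (C.min'_le x hx.1) (Ne.symm hx.2)⟩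
  · rintro ⟨e, he⟩
    set T := S.filter (e < ·) with hT
    have heT : e ∉ T := by simp [hT]
    -- choose minimal U ⊆ T with e ∈ cl U
    have hneU : (T.powerset.filter fun U : Finset α => e ∈ M.closure (↑U : Set α)).Nonempty :=
      ⟨T, by simp [he]⟩
    obtain ⟨U, hU, hmin⟩ := Finset.exists_min_image _ Finset.card hneU
    rw [Finset.mem_filter, Finset.mem_powerset] at hU
    obtain ⟨hUT, heU⟩ := hU
    have hmin' : ∀ D : Finset α, D ⊂ U → e ∉ M.closure ↑D := by
      intro D hD hecl
      have := hmin D (by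
        rw [Finset.mem_filter, Finset.mem_powerset]
        exact ⟨hD.subset.trans hUT, hecl⟩)
      exact absurd (Finset.card_lt_card hD) (by omega)
    have heUnot : e ∉ U := fun h => heT (hUT h)
    -- U is independent
    have hUindep : M.Indep ↑U := by
      rw [Matroid.indep_iff_forall_notMem_closure_diff (by rw [hE]; exact Set.subset_univ _)]
      intro u huU hucl
      have h1 : (↑U : Set α) \ {u} = ↑(U.erase u) := by simp [Finset.coe_erase]
      rw [h1] at hucl
      apply hmin' (U.erase u) (Finset.erase_ssubset huU)
      have : M.closure ↑(U.erase u) = M.closure (insert u ↑(U.erase u)) :=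
        (Matroid.closure_insert_eq_of_mem_closure hucl).symm
      rw [this]
      have h2 : insert u (↑(U.erase u) : Set α) = ↑U := by
        rw [← Finset.coe_insert, Finset.insert_erase huU]
      rwa [h2]
    -- C = insert e U is a circuit
    set C := insert e U with hCdef
    have hCU : C.erase e = U := Finset.erase_insert heUnot
    have hCdep : ¬ M.Indep ↑C := by
      intro hind
      rcases (hUindep.mem_closure_iff).mp heU with hdep | hmem
      · exact hdep.not_indep (by rwa [hCdef, Finset.coe_insert] at hind)
      · exact heUnot hmem
    have hCcirc : IsMatroidCircuit M C := by
      refine ⟨by rw [hE]; exact Set.subset_univ _, hCdep, fun D hD => ?_⟩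
      by_cases heD : e ∈ D
      · set D' := D.erase e with hD'
        have hD'U : D' ⊂ U := by
          rw [Finset.ssubset_iff_subset_ne]
          constructor
          · intro x hx
            rw [Finset.mem_erase] at hx
            rcases Finset.mem_insert.mp (hD.subset hx.2) with h | h
            · exact absurd h hx.1
            · exact h
          · intro hDU
            apply hD.ne
            rw [← Finset.insert_erase heD, ← hD', hDU]
        have heD' : e ∉ M.closure ↑D' := hmin' D' hD'U
        have hD'indep : M.Indep ↑D' := hUindep.subset (by
          exact_mod_cast Finset.coe_subset.mpr hD'U.subset)
        have := (hD'indep.notMem_closure_iff (by rw [hE]; trivial)).mp heD'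
        have hDD' : (↑D : Set α) = insert e ↑D' := by
          rw [← Finset.coe_insert, Finset.insert_erase heD]
        rw [hDD']
        exact this.1
      · have : D ⊆ U := by
          intro x hx
          rcases Finset.mem_insert.mp (hD.subset hx) with rfl | h
          · exact absurd hx heD
          · exact h
        exact hUindep.subset (Finset.coe_subset.mpr this)
    have hCne : C.Nonempty := ⟨e, Finset.mem_insert_self _ _⟩
    have hmineq : C.min' hCne = e := by
      refine le_antisymm (C.min'_le e (Finset.mem_insert_self _ _)) ?_
      refine Finset.le_min' _ _ _ fun y hy => ?_
      rcases Finset.mem_insert.mp hy with rfl | h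
      · exact le_rfl
      · exact le_of_lt (Finset.mem_filter.mp (hUT h)).2
    refine ⟨C.erase (C.min' hCne), ⟨C, hCcirc, hCne, rfl⟩, ?_⟩
    rw [hmineq, hCU]
    exact hUT.trans (Finset.filter_subset _ _)

end B
section C
variable {α : Type*} [Fintype α] [LinearOrder α]

open scoped Classical in
/-- The set of elements in the closure of the strictly-larger part of `S`. -/
noncomputable def wbcA (M : Matroid α) (S : Finset α) : Finset α :=
  Finset.univ.filter fun e => e ∈ M.closure ↑(S.filter (e < ·))

variable {M : Matroid α}

lemma mem_wbcA {e : α} {S : Finset α} :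
    e ∈ wbcA M S ↔ e ∈ M.closure ↑(S.filter (e < ·)) := by
  classical simp [wbcA]

open scoped Classical in
/-- The involution toggling the least element of `wbcA M S`. -/
noncomputable def wbcG (M : Matroid α) (S : Finset α) : Finset α :=
  if h : (wbcA M S).Nonempty then
    (if (wbcA M S).min' h ∈ S then S.erase ((wbcA M S).min' h)
     else insert ((wbcA M S).min' h) S)
  else S

lemma wbc_filter_toggle {S : Finset α} {e f : α} (hef : e ≤ f) :
    (S.erase e).filter (f < ·) = S.filter (f < ·) ∧
    (insert e S).filter (f < ·) = S.filter (f < ·) := by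
  classical
  constructor <;> ext x <;> simp only [Finset.mem_filter, Finset.mem_erase, Finset.mem_insert] <;>
    constructor <;> intro hx
  · exact ⟨hx.1.2, hx.2⟩
  · refine ⟨⟨fun hxe => ?_, hx.1⟩, hx.2⟩
    subst hxe
    exact absurd hx.2 (not_lt.mpr hef)
  · rcases hx.1 with rfl | h
    · exact absurd hx.2 (not_lt.mpr hef)
    · exact ⟨h, hx.2⟩
  · exact ⟨Or.inr hx.1, hx.2⟩

lemma wbc_filter_lt_subset_erase {S : Finset α} {e : α} :
    S.filter (e < ·) ⊆ S.erase e := by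
  intro x hx
  rw [Finset.mem_filter] at hx
  exact Finset.mem_erase.mpr ⟨(hx.2).ne', hx.1⟩

variable (hE : M.E = Set.univ)
include hE

lemma wbcG_spec {S : Finset α} (hA : (wbcA M S).Nonempty) :
    (wbcA M (wbcG M S)).Nonempty ∧
    (∀ h', (wbcA M (wbcG M S)).min' h' = (wbcA M S).min' hA) ∧
    matroidRank M ↑(wbcG M S) = matroidRank M ↑S ∧
    ((wbcA M S).min' hA ∈ S → wbcG M S = S.erase ((wbcA M S).min' hA)) ∧
    ((wbcA M S).min' hA ∉ S → wbcG M S = insert ((wbcA M S).min' hA) S) := by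
  classical
  set e := (wbcA M S).min' hA with he
  have heA : e ∈ wbcA M S := (wbcA M S).min'_mem hA
  have hecl : e ∈ M.closure ↑(S.filter (e < ·)) := mem_wbcA.mp heA
  have hG : wbcG M S = if e ∈ S then S.erase e else insert e S := by
    rw [wbcG, dif_pos hA]
  have hfilt : ∀ f, e ≤ f → (wbcG M S).filter (f < ·) = S.filter (f < ·) := by
    intro f hef
    rw [hG]
    by_cases heS : e ∈ S
    · rw [if_pos heS]; exact (wbc_filter_toggle hef).1
    · rw [if_neg heS]; exact (wbc_filter_toggle hef).2
  have heA' : e ∈ wbcA M (wbcG M S) := by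
    rw [mem_wbcA, hfilt e le_rfl]
    exact hecl
  have hA' : (wbcA M (wbcG M S)).Nonempty := ⟨e, heA'⟩
  have hmin' : ∀ h', (wbcA M (wbcG M S)).min' h' = e := by
    intro h'
    refine le_antisymm (Finset.min'_le _ _ heA') ?_
    by_contra hlt
    push_neg at hlt
    set f := (wbcA M (wbcG M S)).min' h' with hf
    have hfA : f ∈ wbcA M (wbcG M S) := Finset.min'_mem _ _
    have hfcl : f ∈ M.closure ↑((wbcG M S).filter (f < ·)) := mem_wbcA.mp hfA
    have hsub : ((wbcG M S).filter (f < ·) : Set α) ⊆ insert e ↑(S.filter (f < ·)) := by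
      intro x hx
      rw [Finset.mem_coe, Finset.mem_filter] at hx
      have hxG : x ∈ wbcG M S := hx.1
      rw [hG] at hxG
      by_cases heS : e ∈ S
      · rw [if_pos heS] at hxG
        refine Or.inr ?_
        rw [Finset.mem_coe, Finset.mem_filter]
        exact ⟨Finset.mem_of_mem_erase hxG, hx.2⟩
      · rw [if_neg heS] at hxG
        rcases Finset.mem_insert.mp hxG with rfl | hxS
        · exact Or.inl rfl
        · refine Or.inr ?_
          rw [Finset.mem_coe, Finset.mem_filter]
          exact ⟨hxS, hx.2⟩
    have hsub2 : (↑(S.filter (e < ·)) : Set α) ⊆ ↑(S.filter (f < ·)) := by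
      intro x hx
      rw [Finset.mem_coe, Finset.mem_filter] at hx ⊢
      exact ⟨hx.1, lt_trans hlt hx.2⟩
    have hecl' : e ∈ M.closure ↑(S.filter (f < ·)) :=
      M.closure_subset_closure hsub2 hecl
    have hfA' : f ∈ wbcA M S := by
      rw [mem_wbcA]
      have h1 := M.closure_subset_closure hsub hfcl
      rwa [← Matroid.closure_insert_closure_eq_closure_insert,
        Set.insert_eq_of_mem hecl', Matroid.closure_closure] at h1
    have h2 : e ≤ f := by
      rw [he]
      exact Finset.min'_le _ _ hfA'
    exact absurd hlt (not_lt.mpr h2)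
  -- rank preservation
  have hrank : matroidRank M ↑(wbcG M S) = matroidRank M ↑S := by
    have hecl2 : e ∈ M.closure ↑(S.erase e) :=
      M.closure_subset_closure (Finset.coe_subset.mpr wbc_filter_lt_subset_erase) hecl
    have hkey : M.closure (insert e ↑(S.erase e)) = M.closure ↑(S.erase e) :=
      Matroid.closure_insert_eq_of_mem_closure hecl2
    rw [hG]
    by_cases heS : e ∈ S
    · rw [if_pos heS]
      have hS' : (↑S : Set α) = insert e ↑(S.erase e) := by
        rw [← Finset.coe_insert, Finset.insert_erase heS]
      rw [← matroidRank_closure hE (↑(S.erase e)), ← hkey, ← hS',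
        matroidRank_closure hE]
    · rw [if_neg heS]
      have hSe : S.erase e = S := Finset.erase_eq_of_notMem heS
      rw [← matroidRank_closure hE (↑(insert e S) : Set α), Finset.coe_insert]
      rw [← hSe, hkey, hSe, matroidRank_closure hE]
  exact ⟨hA', hmin', hrank, fun h => by rw [hG, if_pos h], fun h => by rw [hG, if_neg h]⟩

end C
open scoped Classical in
lemma wbc_bad_sum_zero {α : Type*} [Fintype α] [LinearOrder α] {M : Matroid α}
    (hE : M.E = Set.univ) (i : ℕ) :
    ∑ S ∈ Finset.univ.filter
        (fun S : Finset α => matroidRank M ↑S = i ∧ (wbcA M S).Nonempty),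
      (-1 : ℤ) ^ S.card = 0 := by
  refine Finset.sum_involution (fun S _ => wbcG M S) ?_ ?_ ?_ ?_
  · -- signs cancel
    intro S hS
    rw [Finset.mem_filter] at hS
    obtain ⟨-, -, hA⟩ := hS
    obtain ⟨-, -, -, h4, h5⟩ := wbcG_spec hE hA
    show (-1 : ℤ) ^ S.card + (-1) ^ (wbcG M S).card = 0
    by_cases heS : (wbcA M S).min' hA ∈ S
    · rw [h4 heS, Finset.card_erase_of_mem heS]
      have hpos : 1 ≤ S.card := Finset.card_pos.mpr ⟨_, heS⟩
      obtain ⟨m, hm⟩ : ∃ m, S.card = m + 1 := ⟨S.card - 1, by omega⟩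
      rw [hm, Nat.add_sub_cancel, pow_succ]
      ring
    · rw [h5 heS, Finset.card_insert_of_notMem heS, pow_succ]
      ring
  · -- g S ≠ S
    intro S hS _
    rw [Finset.mem_filter] at hS
    obtain ⟨-, -, hA⟩ := hS
    obtain ⟨-, -, -, h4, h5⟩ := wbcG_spec hE hA
    show wbcG M S ≠ S
    by_cases heS : (wbcA M S).min' hA ∈ S
    · rw [h4 heS]
      intro h
      have hne := Finset.notMem_erase ((wbcA M S).min' hA) S
      rw [h] at hne
      exact hne heS
    · rw [h5 heS]
      intro h
      have hmem := Finset.mem_insert_self ((wbcA M S).min' hA) S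
      rw [h] at hmem
      exact heS hmem
  · -- g S in the set
    intro S hS
    rw [Finset.mem_filter] at hS ⊢
    obtain ⟨-, hrk, hA⟩ := hS
    obtain ⟨h1, -, h3, -, -⟩ := wbcG_spec hE hA
    exact ⟨Finset.mem_univ _, h3.trans hrk, h1⟩
  · -- involution
    intro S hS
    rw [Finset.mem_filter] at hS
    obtain ⟨-, -, hA⟩ := hS
    obtain ⟨h1, h2, -, h4, h5⟩ := wbcG_spec hE hA
    set e := (wbcA M S).min' hA with he
    show wbcG M (wbcG M S) = S
    have hm : wbcG M (wbcG M S) =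
        if e ∈ wbcG M S then (wbcG M S).erase e else insert e (wbcG M S) := by
      rw [wbcG, dif_pos h1, h2 h1]
    by_cases heS : e ∈ S
    · rw [hm, h4 heS, if_neg (Finset.notMem_erase _ _), Finset.insert_erase heS]
    · rw [hm, h5 heS, if_pos (Finset.mem_insert_self _ _), Finset.erase_insert heS]
section D
variable {α : Type*} [Fintype α] [LinearOrder α] {M : Matroid α}

open scoped Classical in
/-- `ν F = ∑_{S : cl S = F} (-1)^|S|`. -/
noncomputable def wbcNu (M : Matroid α) (F : Finset α) : ℤ :=
  ∑ S ∈ Finset.univ.filter (fun S : Finset α => M.closure ↑S = ↑F), (-1 : ℤ) ^ S.card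

/-- Finset version of a (finite) set. -/
noncomputable def wbcFl (X : Set α) : Finset α := X.toFinite.toFinset

@[simp] lemma wbcFl_coe (X : Set α) : (wbcFl X : Set α) = X := Set.Finite.coe_toFinset _

variable (hE : M.E = Set.univ)
include hE

lemma wbc_closure_empty (hl : ∀ a : α, M.Indep {a}) : M.closure (∅ : Set α) = ∅ := by
  ext x
  simp only [Set.mem_empty_iff_false, iff_false]
  intro hx
  rcases (M.empty_indep.mem_closure_iff).mp hx with hdep | h
  · have h1 : (insert x ∅ : Set α) = {x} := by simp
    rw [h1] at hdep
    exact hdep.not_indep (hl x)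
  · exact h

open scoped Classical in
lemma wbc_nu_rec {F : Finset α} (hF : M.IsFlat ↑F) :
    ∑ G ∈ Finset.univ.filter (fun G : Finset α => M.IsFlat ↑G ∧ (G : Set α) ⊆ ↑F), wbcNu M G
      = if F = ∅ then 1 else 0 := by
  have hmaps : ∀ S ∈ F.powerset, wbcFl (M.closure ↑S) ∈
      Finset.univ.filter (fun G : Finset α => M.IsFlat ↑G ∧ (G : Set α) ⊆ ↑F) := by
    intro S hS
    rw [Finset.mem_filter]
    refine ⟨Finset.mem_univ _, ?_, ?_⟩
    · rw [wbcFl_coe]; exact wbc_flat_closure M ↑S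
    · rw [wbcFl_coe]
      have h1 : M.closure ↑S ⊆ M.closure ↑F :=
        M.closure_subset_closure (Finset.coe_subset.mpr (Finset.mem_powerset.mp hS))
      rwa [hF.closure] at h1
  have hfib := Finset.sum_fiberwise_of_maps_to hmaps (fun S : Finset α => (-1 : ℤ) ^ S.card)
  rw [← Finset.sum_powerset_neg_one_pow_card, ← hfib]
  refine Finset.sum_congr rfl fun G hG => ?_
  rw [Finset.mem_filter] at hG
  obtain ⟨-, hGflat, hGF⟩ := hG
  rw [wbcNu]
  have hiff : ∀ S : Finset α, M.closure ↑S = (↑G : Set α) ↔ wbcFl (M.closure ↑S) = G := by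
    intro S
    constructor
    · intro h
      apply Finset.coe_injective
      rw [wbcFl_coe, h]
    · intro h
      rw [← wbcFl_coe (M.closure ↑S), h]
  refine Finset.sum_congr ?_ fun _ _ => rfl
  ext S
  simp only [Finset.mem_filter, Finset.mem_powerset, Finset.mem_univ, true_and]
  constructor
  · intro hcl
    refine ⟨?_, (hiff S).mp hcl⟩
    refine Finset.coe_subset.mp ?_
    calc (↑S : Set α) ⊆ M.closure ↑S := wbc_subset_closure hE ↑S
      _ = ↑G := hcl
      _ ⊆ ↑F := hGF
  · rintro ⟨hSF, hcl⟩
    exact (hiff S).mpr hcl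

open scoped Classical in
lemma wbc_mu_eq_nu (hl : ∀ a : α, M.Indep {a}) (μ : Finset α → ℤ)
    (hμ : ∀ F : Finset α, M.IsFlat ↑F →
      (∑ G ∈ Finset.univ.filter (fun G : Finset α => M.IsFlat ↑G ∧ (G : Set α) ⊆ ↑F), μ G)
        = if (F : Set α) = M.closure ∅ then 1 else 0) :
    ∀ F : Finset α, M.IsFlat ↑F → μ F = wbcNu M F := by
  have key : ∀ n : ℕ, ∀ F : Finset α, F.card = n → M.IsFlat ↑F → μ F = wbcNu M F := by
    intro n
    induction n using Nat.strong_induction_on with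
    | _ n IH =>
      intro F hcard hF
      set t := Finset.univ.filter (fun G : Finset α => M.IsFlat ↑G ∧ (G : Set α) ⊆ ↑F) with ht
      have hFt : F ∈ t := by
        rw [ht, Finset.mem_filter]
        exact ⟨Finset.mem_univ _, hF, subset_rfl⟩
      have hIH : ∀ G ∈ t.erase F, μ G = wbcNu M G := by
        intro G hG
        rw [Finset.mem_erase] at hG
        rw [ht, Finset.mem_filter] at hG
        obtain ⟨hne, -, hGflat, hGF⟩ := hG
        have hsub : G ⊂ F :=
          Finset.ssubset_iff_subset_ne.mpr ⟨Finset.coe_subset.mp hGF, hne⟩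
        exact IH G.card (hcard ▸ Finset.card_lt_card hsub) G rfl hGflat
      have h1 : ∑ G ∈ t.erase F, μ G + μ F = if F = ∅ then 1 else 0 := by
        rw [Finset.sum_erase_add _ _ hFt, hμ F hF, wbc_closure_empty hE hl]
        simp [Finset.coe_eq_empty]
      have h2 : ∑ G ∈ t.erase F, wbcNu M G + wbcNu M F = if F = ∅ then 1 else 0 := by
        rw [Finset.sum_erase_add _ _ hFt, wbc_nu_rec hE hF]
      have h3 : ∑ G ∈ t.erase F, μ G = ∑ G ∈ t.erase F, wbcNu M G :=
        Finset.sum_congr rfl hIH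
      omega
  exact fun F => key F.card F rfl

open scoped Classical in
lemma wbc_nu_sum (i : ℕ) :
    ∑ F ∈ Finset.univ.filter
        (fun F : Finset α => M.IsFlat ↑F ∧ matroidRank M ↑F = i), wbcNu M F
      = ∑ S ∈ Finset.univ.filter (fun S : Finset α => matroidRank M ↑S = i),
          (-1 : ℤ) ^ S.card := by
  have hmaps : ∀ S ∈ Finset.univ.filter (fun S : Finset α => matroidRank M ↑S = i),
      wbcFl (M.closure ↑S) ∈ Finset.univ.filter
        (fun F : Finset α => M.IsFlat ↑F ∧ matroidRank M ↑F = i) := by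
    intro S hS
    rw [Finset.mem_filter] at hS ⊢
    refine ⟨Finset.mem_univ _, ?_, ?_⟩
    · rw [wbcFl_coe]; exact wbc_flat_closure M ↑S
    · rw [wbcFl_coe, matroidRank_closure hE]; exact hS.2
  have hfib := Finset.sum_fiberwise_of_maps_to hmaps (fun S : Finset α => (-1 : ℤ) ^ S.card)
  rw [← hfib]
  refine Finset.sum_congr rfl fun G hG => ?_
  rw [Finset.mem_filter] at hG
  obtain ⟨-, hGflat, hGrk⟩ := hG
  rw [wbcNu]
  have hiff : ∀ S : Finset α, M.closure ↑S = (↑G : Set α) ↔ wbcFl (M.closure ↑S) = G := by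
    intro S
    constructor
    · intro h
      apply Finset.coe_injective
      rw [wbcFl_coe, h]
    · intro h
      rw [← wbcFl_coe (M.closure ↑S), h]
  refine Finset.sum_congr ?_ fun _ _ => rfl
  ext S
  simp only [Finset.mem_filter, Finset.mem_univ, true_and]
  constructor
  · intro hcl
    refine ⟨?_, (hiff S).mp hcl⟩
    rw [← matroidRank_closure hE (↑S : Set α), hcl]
    exact hGrk
  · rintro ⟨hrk, hcl⟩
    exact (hiff S).mpr hcl

end D

open scoped Classical in
/-- The characteristic polynomial of a matroid `M` of rank `r + 1`, with respect to
a Möbius function `μ` of the lattice of flats. -/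
noncomputable def charPoly {α : Type*} [Fintype α] (M : Matroid α) (μ : Finset α → ℤ)
    (r : ℕ) : Polynomial ℤ :=
  ∑ F ∈ Finset.univ.filter (fun F : Finset α => M.IsFlat ↑F),
    C (μ F) * X ^ (r + 1 - matroidRank M ↑F)

open scoped Classical in
/-- **Whitney's broken circuit theorem.** For a finite loopless matroid `M` of
rank `r+1` on a linearly ordered ground set, the number of cardinality-`i` subsets containing
no broken circuit equals the absolute value `w i` of the coefficient of `q^(r+1-i)` in the
characteristic polynomial `χ_M(q) = ∑ (-1)^i w i q^(r+1-i)`; that is, the coefficient of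
`q^(r+1-i)` equals `(-1)^i` times that number. -/
theorem whitney_broken_circuit {α : Type*} [Fintype α] [LinearOrder α]
    (M : Matroid α) (hE : M.E = Set.univ)
    (h_loopless : ∀ a : α, M.Indep {a})
    (r : ℕ) (h_rank : matroidRank M Set.univ = r + 1)
    (μ : Finset α → ℤ)
    (hμ : ∀ F : Finset α, M.IsFlat ↑F →
      (∑ G ∈ Finset.univ.filter (fun G : Finset α => M.IsFlat ↑G ∧ (G : Set α) ⊆ ↑F), μ G)
        = if (F : Set α) = M.closure ∅ then 1 else 0) :
    ∀ i, i ≤ r + 1 →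
      (charPoly M μ r).coeff (r + 1 - i) =
        (-1 : ℤ) ^ i *
          (((Finset.univ.powersetCard i).filter
            (fun S : Finset α => ∀ B, IsBrokenCircuit M B → ¬ B ⊆ S)).card : ℤ) := by
  intro i hi
  have hrk_le : ∀ F : Finset α, matroidRank M (↑F : Set α) ≤ r + 1 := by
    intro F
    rw [← h_rank]
    exact matroidRank_mono (Set.subset_univ _)
  -- Step 1: extract the coefficient
  have step1 : (charPoly M μ r).coeff (r + 1 - i) =
      ∑ F ∈ Finset.univ.filter
        (fun F : Finset α => M.IsFlat ↑F ∧ matroidRank M ↑F = i), μ F := by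
    rw [charPoly, Polynomial.finset_sum_coeff]
    simp only [Polynomial.coeff_C_mul, Polynomial.coeff_X_pow]
    rw [← Finset.filter_filter]
    rw [Finset.sum_filter (fun F : Finset α => matroidRank M (↑F : Set α) = i)]
    refine Finset.sum_congr rfl fun F hF => ?_
    have hle := hrk_le F
    by_cases h : matroidRank M (↑F : Set α) = i
    · rw [if_pos h, if_pos (by omega), mul_one]
    · rw [if_neg h, if_neg (by omega), mul_zero]
  -- Step 2: replace μ by ν
  have step2 : ∑ F ∈ Finset.univ.filter
        (fun F : Finset α => M.IsFlat ↑F ∧ matroidRank M ↑F = i), μ F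
      = ∑ F ∈ Finset.univ.filter
        (fun F : Finset α => M.IsFlat ↑F ∧ matroidRank M ↑F = i), wbcNu M F := by
    refine Finset.sum_congr rfl fun F hF => ?_
    rw [Finset.mem_filter] at hF
    exact wbc_mu_eq_nu hE h_loopless μ hμ F hF.2.1
  -- Step 3: the subset-sum by rank
  have step3 := wbc_nu_sum (M := M) hE i
  -- Step 4: split off the sets containing a broken circuit
  have step4 : ∑ S ∈ Finset.univ.filter
        (fun S : Finset α => matroidRank M ↑S = i), (-1 : ℤ) ^ S.card
      = ∑ S ∈ Finset.univ.filter
          (fun S : Finset α => matroidRank M ↑S = i ∧ (wbcA M S).Nonempty),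
            (-1 : ℤ) ^ S.card
        + ∑ S ∈ Finset.univ.filter
          (fun S : Finset α => matroidRank M ↑S = i ∧ ¬ (wbcA M S).Nonempty),
            (-1 : ℤ) ^ S.card := by
    rw [← Finset.filter_filter, ← Finset.filter_filter,
      Finset.sum_filter_add_sum_filter_not]
  -- NBC sets are independent
  have hNBC_indep : ∀ S : Finset α, ¬ (wbcA M S).Nonempty → M.Indep ↑S := by
    intro S hA
    by_contra hdep
    obtain ⟨C, hCS, hC⟩ := wbc_dep_contains_circuit hE hdep
    have hCne : C.Nonempty := by
      rw [Finset.nonempty_iff_ne_empty]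
      rintro rfl
      exact hC.2.1 (by simpa using M.empty_indep)
    have hbroken : ∃ B, IsBrokenCircuit M B ∧ B ⊆ S :=
      ⟨C.erase (C.min' hCne), ⟨C, hC, hCne, rfl⟩,
        (Finset.erase_subset _ _).trans hCS⟩
    obtain ⟨e, he⟩ := (wbc_broken_iff hE).mp hbroken
    exact hA ⟨e, mem_wbcA.mpr he⟩
  -- the NBC part of the sum
  have hset : Finset.univ.filter
        (fun S : Finset α => matroidRank M ↑S = i ∧ ¬ (wbcA M S).Nonempty)
      = (Finset.univ.powersetCard i).filter
          (fun S : Finset α => ∀ B, IsBrokenCircuit M B → ¬ B ⊆ S) := by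
    ext S
    simp only [Finset.mem_filter, Finset.mem_univ, true_and,
      Finset.mem_powersetCard_univ]
    have hA_iff : (wbcA M S).Nonempty ↔ ∃ B, IsBrokenCircuit M B ∧ B ⊆ S := by
      rw [wbc_broken_iff hE]
      constructor
      · rintro ⟨e, he⟩
        exact ⟨e, mem_wbcA.mp he⟩
      · rintro ⟨e, he⟩
        exact ⟨e, mem_wbcA.mpr he⟩
    have hnbc_iff : (¬ (wbcA M S).Nonempty) ↔ ∀ B, IsBrokenCircuit M B → ¬ B ⊆ S := by
      rw [hA_iff]
      push_neg
      rfl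
    constructor
    · rintro ⟨hrk, hA⟩
      have hind := hNBC_indep S hA
      rw [matroidRank_indep hind] at hrk
      exact ⟨hrk, hnbc_iff.mp hA⟩
    · rintro ⟨hcard, hnbc⟩
      have hA := hnbc_iff.mpr hnbc
      have hind := hNBC_indep S hA
      rw [matroidRank_indep hind]
      exact ⟨hcard, hA⟩
  have step5 : ∑ S ∈ Finset.univ.filter
        (fun S : Finset α => matroidRank M ↑S = i ∧ ¬ (wbcA M S).Nonempty),
          (-1 : ℤ) ^ S.card
      = (-1 : ℤ) ^ i *
          (((Finset.univ.powersetCard i).filter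
            (fun S : Finset α => ∀ B, IsBrokenCircuit M B → ¬ B ⊆ S)).card : ℤ) := by
    rw [hset, Finset.sum_congr rfl (fun S hS => ?_), Finset.sum_const, nsmul_eq_mul, mul_comm]
    rw [Finset.mem_filter, Finset.mem_powersetCard_univ] at hS
    rw [hS.1]
  rw [step1, step2, step3, step4, wbc_bad_sum_zero hE i, zero_add, step5]
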